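/- arXiv:1602.02094 — 3 statements merged into one kernel-verified Lean document; each statement's English description precedes it below -/
import Mathlib

section
/- Let η = 2^{−k} for some k ≥ 1. Then the union of the open Euclidean balls B(x, sep(η)) over x ∈ G_η covers the unit sphere S^n ⊂ ℝ^{n+1}, where sep(η) := η√(n+1). -/
open Function Metric Filter
open scoped ENNReal Real

noncomputable section

/-- The sup norm ‖·‖_∞ on ℝ^k (viewed as Euclidean space). -/
def supNorm {k : ℕ} (y : EuclideanSpace ℝ (Fin k)) : ℝ :=
  ‖(WithLp.equiv 2 (Fin k → ℝ)) y‖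

/-- Radial projection onto the unit sphere, φ(y) = y/‖y‖. -/
def sphProj {k : ℕ} (y : EuclideanSpace ℝ (Fin k)) : EuclideanSpace ℝ (Fin k) :=
  ‖y‖⁻¹ • y

/-- The angular distance d_S(x₁,x₂) = arccos⟨x₁,x₂⟩ on the unit sphere. -/
def angDist {k : ℕ} (x₁ x₂ : EuclideanSpace ℝ (Fin k)) : ℝ :=
  Real.arccos (inner ℝ x₁ x₂)

/-- The grid U_η on the boundary of the unit cube: points with ‖y‖_∞ = 1 all of whose
coordinates are of the form i·2^{−k} with i ∈ {−2^k,…,2^k}. -/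
def gridCube (n k : ℕ) : Set (EuclideanSpace ℝ (Fin (n + 1))) :=
  {y | supNorm y = 1 ∧ ∀ j : Fin (n + 1), ∃ i : ℤ, |i| ≤ 2 ^ k ∧ y j = (i : ℝ) / 2 ^ k}

/-- The grid G_η = φ(U_η) on the unit sphere. -/
def gridSphere (n k : ℕ) : Set (EuclideanSpace ℝ (Fin (n + 1))) :=
  sphProj '' gridCube n k

lemma normalize_sub_normalize_le {E : Type*} [NormedAddCommGroup E] [NormedSpace ℝ E]
    {a b : E} (ha : a ≠ 0) (hb : b ≠ 0) :
    ‖‖a‖⁻¹ • a - ‖b‖⁻¹ • b‖ ≤ 2 * ‖a - b‖ / ‖a‖ := by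
  have ha0 : (0:ℝ) < ‖a‖ := norm_pos_iff.mpr ha
  have hb0 : (0:ℝ) < ‖b‖ := norm_pos_iff.mpr hb
  have key : ‖a‖⁻¹ • a - ‖b‖⁻¹ • b = ‖a‖⁻¹ • (a - b) + (‖a‖⁻¹ - ‖b‖⁻¹) • b := by
    rw [smul_sub, sub_smul]; abel
  have h1 : ‖‖a‖⁻¹ • (a - b)‖ = ‖a - b‖ / ‖a‖ := by
    rw [norm_smul, Real.norm_eq_abs, abs_of_pos (by positivity)]; ring
  have h2 : ‖(‖a‖⁻¹ - ‖b‖⁻¹) • b‖ ≤ ‖a - b‖ / ‖a‖ := by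
    rw [norm_smul, Real.norm_eq_abs]
    have e : ‖a‖⁻¹ - ‖b‖⁻¹ = (‖b‖ - ‖a‖) / (‖a‖ * ‖b‖) := by field_simp
    have e2 : |‖b‖ - ‖a‖| / (‖a‖ * ‖b‖) * ‖b‖ = |‖b‖ - ‖a‖| / ‖a‖ := by
      field_simp
    rw [e, abs_div, abs_of_pos (mul_pos ha0 hb0), e2]
    gcongr
    calc |‖b‖ - ‖a‖| ≤ ‖b - a‖ := abs_norm_sub_norm_le b a
      _ = ‖a - b‖ := norm_sub_rev _ _
  calc ‖‖a‖⁻¹ • a - ‖b‖⁻¹ • b‖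
      = ‖‖a‖⁻¹ • (a - b) + (‖a‖⁻¹ - ‖b‖⁻¹) • b‖ := by rw [key]
    _ ≤ ‖‖a‖⁻¹ • (a - b)‖ + ‖(‖a‖⁻¹ - ‖b‖⁻¹) • b‖ := norm_add_le _ _
    _ ≤ ‖a - b‖ / ‖a‖ + ‖a - b‖ / ‖a‖ := by rw [h1]; gcongr
    _ = 2 * ‖a - b‖ / ‖a‖ := by ring

/-- For η = 2^{−k} with k ≥ 1, the union of the balls B(x, sep(η)) for
x ∈ G_η, where sep(η) := η√(n+1), covers the unit sphere Sⁿ. -/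
theorem statement8 {n k : ℕ} (hk : 1 ≤ k) (η : ℝ) (hη : η = ((2 : ℝ) ^ k)⁻¹) :
    Metric.sphere (0 : EuclideanSpace ℝ (Fin (n + 1))) 1 ⊆
      ⋃ x ∈ gridSphere n k, Metric.ball x (η * Real.sqrt (n + 1)) := by
  have h2k : (0:ℝ) < 2 ^ k := by positivity
  have hη0 : 0 < η := by rw [hη]; positivity
  intro z hz
  have hz1 : ‖z‖ = 1 := by simpa using hz
  have hzne : z ≠ 0 := by intro h; rw [h] at hz1; simp at hz1
  set s := supNorm z with hs
  have hs0 : 0 < s := by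
    rw [hs, supNorm]
    exact norm_pos_iff.mpr (fun h => hzne (by simpa using congrArg (WithLp.equiv 2 _).symm h))
  -- coordinate of maximal absolute value
  obtain ⟨j, -, hj⟩ := Finset.exists_mem_eq_sup Finset.univ Finset.univ_nonempty
    (fun i : Fin (n+1) => ‖z i‖₊)
  have hjz : |z j| = s := by
    rw [hs, supNorm]
    have : ‖(WithLp.equiv 2 (Fin (n+1) → ℝ)) z‖₊ = ‖z j‖₊ := by
      rw [Pi.nnnorm_def]; exact hj
    calc |z j| = (‖z j‖₊ : ℝ) := rfl
      _ = _ := by rw [← this, coe_nnnorm]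
  have hcoord : ∀ i, |z i| ≤ s := fun i => by
    rw [hs, supNorm]; exact norm_le_pi_norm ((WithLp.equiv 2 _) z) i
  -- the rounded grid point
  set v : Fin (n+1) → ℝ := fun i => ((round (s⁻¹ * z i * 2 ^ k) : ℤ) : ℝ) / 2 ^ k with hv
  set u : EuclideanSpace ℝ (Fin (n+1)) := (WithLp.equiv 2 (Fin (n+1) → ℝ)).symm v with hu
  have huapp : ∀ i, u i = ((round (s⁻¹ * z i * 2 ^ k) : ℤ) : ℝ) / 2 ^ k := fun i => rfl
  -- per-coordinate properties
  have hyj : s⁻¹ * z j = 1 ∨ s⁻¹ * z j = -1 := by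
    rcases abs_eq hs0.le |>.mp hjz with h | h
    · left; rw [h]; field_simp
    · right; rw [h]; field_simp
  have hround2k : round ((2:ℝ) ^ k) = 2 ^ k := by
    rw [show ((2:ℝ) ^ k) = ((2 ^ k : ℤ) : ℝ) by push_cast; ring]
    exact round_intCast _
  have huj : u j = s⁻¹ * z j := by
    rw [huapp j]
    rcases hyj with h | h <;> rw [h]
    · rw [one_mul, hround2k]; push_cast; field_simp
    · have hneg : round (-(2:ℝ) ^ k) = -(2 ^ k : ℤ) := by
        rw [show (-(2:ℝ) ^ k) = (((-(2 ^ k) : ℤ)) : ℝ) by push_cast; ring]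
        exact round_intCast _
      rw [show (-1 : ℝ) * 2 ^ k = -(2:ℝ) ^ k by ring, hneg]
      push_cast; field_simp
  have hujabs : |u j| = 1 := by
    rw [huj]; rcases hyj with h | h <;> rw [h] <;> norm_num
  have hbd : ∀ i, |s⁻¹ * z i| ≤ 1 := fun i => by
    rw [abs_mul, abs_inv, abs_of_pos hs0]
    calc s⁻¹ * |z i| ≤ s⁻¹ * s := by gcongr; exact hcoord i
      _ = 1 := inv_mul_cancel₀ hs0.ne'
  have hvbd : ∀ i, |v i| ≤ 1 := fun i => by
    rw [hv]
    have h1 : |((round (s⁻¹ * z i * 2 ^ k) : ℤ) : ℝ)| ≤ 2 ^ k + 1/2 := by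
      have := abs_sub_round (s⁻¹ * z i * 2 ^ k)
      have h2 : |s⁻¹ * z i * 2 ^ k| ≤ 2 ^ k := by
        rw [abs_mul, abs_of_pos h2k]
        calc |s⁻¹ * z i| * 2 ^ k ≤ 1 * 2 ^ k := by gcongr; exact hbd i
          _ = 2 ^ k := one_mul _
      set x := s⁻¹ * z i * 2 ^ k with hx
      set r := ((round x : ℤ) : ℝ) with hr
      calc |r| = |x + (r - x)| := by ring_nf
        _ ≤ |x| + |r - x| := abs_add_le _ _
        _ = |x| + |x - r| := by rw [abs_sub_comm]
        _ ≤ 2 ^ k + 1/2 := add_le_add h2 this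
    have h3 : |((round (s⁻¹ * z i * 2 ^ k) : ℤ) : ℝ)| ≤ 2 ^ k := by
      have h4 : |round (s⁻¹ * z i * 2 ^ k)| ≤ (2:ℤ) ^ k := by
        have : ((|round (s⁻¹ * z i * 2 ^ k)| : ℤ) : ℝ) < ((2:ℤ)^k : ℤ) + 1 := by
          push_cast; calc (|round (s⁻¹ * z i * 2 ^ k)| : ℝ) = |((round (s⁻¹ * z i * 2 ^ k) : ℤ) : ℝ)| := by push_cast; ring
            _ ≤ 2 ^ k + 1/2 := h1
            _ < 2 ^ k + 1 := by norm_num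
        exact_mod_cast Int.lt_add_one_iff.mp (by exact_mod_cast this)
      calc |((round (s⁻¹ * z i * 2 ^ k) : ℤ) : ℝ)| = ((|round (s⁻¹ * z i * 2 ^ k)| : ℤ) : ℝ) := by
            push_cast; ring
        _ ≤ (((2:ℤ)^k : ℤ) : ℝ) := by exact_mod_cast h4
        _ = 2 ^ k := by push_cast; ring
    rw [abs_div, abs_of_pos h2k, div_le_one h2k]
    exact h3
  -- u is in the grid cube
  have hugrid : u ∈ gridCube n k := by
    constructor
    · rw [supNorm]
      apply le_antisymm
      · rw [pi_norm_le_iff_of_nonneg (zero_le_one)]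
        intro i
        exact (Real.norm_eq_abs _).trans_le (hvbd i)
      · calc (1:ℝ) = |u j| := hujabs.symm
          _ ≤ _ := norm_le_pi_norm ((WithLp.equiv 2 _) u) j
    · intro i
      refine ⟨round (s⁻¹ * z i * 2 ^ k), ?_, rfl⟩
      have h := hvbd i
      rw [hv, abs_div, abs_of_pos h2k, div_le_one h2k] at h
      have : |((round (s⁻¹ * z i * 2 ^ k) : ℤ) : ℝ)| ≤ (((2:ℤ)^k : ℤ) : ℝ) := by
        push_cast at h ⊢; exact h
      exact_mod_cast this
  -- y := normalized cube point over z
  set y : EuclideanSpace ℝ (Fin (n+1)) := s⁻¹ • z with hy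
  have hyapp : ∀ i, y i = s⁻¹ * z i := fun i => rfl
  have hyne : y ≠ 0 := smul_ne_zero (by positivity) hzne
  have hynorm : ‖y‖ = s⁻¹ := by
    rw [hy, norm_smul, Real.norm_eq_abs, abs_of_pos (by positivity), hz1, mul_one]
  have hzproj : sphProj y = z := by
    rw [sphProj, hynorm, hy, smul_smul, inv_inv, mul_inv_cancel₀ hs0.ne', one_smul]
  -- norms at least 1
  have hnorm_ge : ∀ (w : EuclideanSpace ℝ (Fin (n+1))), |w j| = 1 → 1 ≤ ‖w‖ := by
    intro w hw
    rw [EuclideanSpace.norm_eq]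
    calc (1:ℝ) = Real.sqrt (‖w j‖ ^ 2) := by
          rw [Real.norm_eq_abs, hw]; norm_num
      _ ≤ _ := by
          apply Real.sqrt_le_sqrt
          exact Finset.single_le_sum (f := fun i => ‖w i‖ ^ 2)
            (fun i _ => by positivity) (Finset.mem_univ j)
  have hyj1 : |y j| = 1 := by rw [hyapp]; rcases hyj with h | h <;> rw [h] <;> norm_num
  have hy1 : 1 ≤ ‖y‖ := hnorm_ge y hyj1
  have hune : u ≠ 0 := by
    intro h
    have := hujabs
    rw [h] at this
    simp at this
  -- bound ‖y - u‖
  have hdiff : ∀ i, |y i - u i| ≤ η / 2 := by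
    intro i
    rw [hyapp i, huapp i]
    have : s⁻¹ * z i - ((round (s⁻¹ * z i * 2 ^ k) : ℤ) : ℝ) / 2 ^ k
        = (s⁻¹ * z i * 2 ^ k - ((round (s⁻¹ * z i * 2 ^ k) : ℤ) : ℝ)) / 2 ^ k := by
      field_simp
    rw [this, abs_div, abs_of_pos h2k, hη]
    rw [div_le_div_iff₀ h2k (by norm_num : (0:ℝ) < 2)]
    calc |s⁻¹ * z i * 2 ^ k - ((round (s⁻¹ * z i * 2 ^ k) : ℤ) : ℝ)| * 2
        ≤ (1/2) * 2 := by gcongr; exact abs_sub_round _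
      _ = ((2:ℝ)^k)⁻¹ * 2 ^ k := by field_simp
  have hdiffj : y j - u j = 0 := by rw [huj, hyapp]; ring
  have hyu : ‖y - u‖ ≤ Real.sqrt n * (η / 2) := by
    rw [EuclideanSpace.norm_eq]
    have hsum : ∑ i : Fin (n+1), ‖(y - u) i‖ ^ 2 ≤ n * (η/2)^2 := by
      have hsplit := Finset.add_sum_erase Finset.univ (fun i => ‖(y - u) i‖ ^ 2)
        (Finset.mem_univ j)
      rw [← hsplit]
      beta_reduce
      have happ : ∀ i : Fin (n+1), (y - u) i = y i - u i := fun i => rfl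
      have h0 : ‖(y - u) j‖ ^ 2 = 0 := by rw [happ, hdiffj]; simp
      rw [h0, zero_add]
      calc ∑ i ∈ Finset.univ.erase j, ‖(y - u) i‖ ^ 2
          ≤ (Finset.univ.erase j).card • ((η/2)^2) := by
            apply Finset.sum_le_card_nsmul
            intro i _
            rw [happ, Real.norm_eq_abs]
            have h := hdiff i
            have h2 := abs_nonneg (y i - u i)
            have h3 : (y i - u i) ^ 2 = |y i - u i| ^ 2 := (sq_abs _).symm
            nlinarith
        _ = n * (η/2)^2 := by
            rw [Finset.card_erase_of_mem (Finset.mem_univ j), Finset.card_univ,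
              Fintype.card_fin]
            simp [nsmul_eq_mul]
    calc Real.sqrt (∑ i : Fin (n+1), ‖(y - u) i‖ ^ 2)
        ≤ Real.sqrt (n * (η/2)^2) := Real.sqrt_le_sqrt hsum
      _ = Real.sqrt n * (η/2) := by
          rw [Real.sqrt_mul (by positivity), Real.sqrt_sq (by positivity)]
  -- conclude
  refine Set.mem_biUnion (Set.mem_image_of_mem sphProj hugrid) ?_
  rw [Metric.mem_ball, dist_eq_norm, ← hzproj, sphProj, sphProj]
  calc ‖‖y‖⁻¹ • y - ‖u‖⁻¹ • u‖ ≤ 2 * ‖y - u‖ / ‖y‖ := normalize_sub_normalize_le hyne hune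
    _ ≤ 2 * (Real.sqrt n * (η/2)) / 1 := by
        gcongr
    _ = Real.sqrt n * η := by ring
    _ < Real.sqrt (n+1) * η :=
        mul_lt_mul_of_pos_right (Real.sqrt_lt_sqrt (by positivity) (by linarith)) hη0
    _ = η * Real.sqrt (n+1) := by ring
end
end

section
/- Let f : ℝ^{n+1} → ℝ^m be analytic and p ∈ ℝ^{n+1} with Df(p) surjective, and set H₂ := (ker Df(p))^⊥. Then for every z ∈ ℝ^{n+1} with ‖z‖·γ(f,p) < 1 − √2/2, the restriction Df(p+z)|_{H₂} : H₂ → ℝ^m is invertible (a linear isomorphism). -/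
open Function Metric Filter
open scoped ENNReal NNReal Topology

noncomputable section

/-- Moore–Penrose inverse A† = Aᵀ (A Aᵀ)⁻¹ of a (surjective) continuous linear map
between real inner product spaces. -/
def pinv {E F : Type*} [NormedAddCommGroup E] [InnerProductSpace ℝ E] [CompleteSpace E]
    [NormedAddCommGroup F] [InnerProductSpace ℝ F] [CompleteSpace F]
    (A : E →L[ℝ] F) : F →L[ℝ] E :=
  (ContinuousLinearMap.adjoint A).comp (Ring.inverse (A.comp (ContinuousLinearMap.adjoint A)))

/-- The k-th term ‖Df(x)† ∘ (D^k f(x)/k!)‖^(1/(k−1)) in the definition of Smale's γ. -/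
def gammaSeq {E F : Type*} [NormedAddCommGroup E] [InnerProductSpace ℝ E] [CompleteSpace E]
    [NormedAddCommGroup F] [InnerProductSpace ℝ F] [CompleteSpace F]
    (f : E → F) (x : E) (k : ℕ) : ℝ :=
  (‖(pinv (fderiv ℝ f x)).compContinuousMultilinearMap (iteratedFDeriv ℝ k f x)‖
    / (k.factorial : ℝ)) ^ ((1 : ℝ) / ((k : ℝ) - 1))

/-- Smale's γ(f,x) = sup_{k≥2} ‖Df(x)† ∘ (D^k f(x)/k!)‖^(1/(k−1)), as an extended real. -/
def gammaE {E F : Type*} [NormedAddCommGroup E] [InnerProductSpace ℝ E] [CompleteSpace E]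
    [NormedAddCommGroup F] [InnerProductSpace ℝ F] [CompleteSpace F]
    (f : E → F) (x : E) : ℝ≥0∞ :=
  ⨆ (k : ℕ) (_ : 2 ≤ k), ENNReal.ofReal (gammaSeq f x k)

/-- Smale's β(f,x) = ‖Df(x)† f(x)‖. -/
def betaR {E F : Type*} [NormedAddCommGroup E] [InnerProductSpace ℝ E] [CompleteSpace E]
    [NormedAddCommGroup F] [InnerProductSpace ℝ F] [CompleteSpace F]
    (f : E → F) (x : E) : ℝ :=
  ‖pinv (fderiv ℝ f x) (f x)‖

section Aux

variable {E F : Type*} [NormedAddCommGroup E] [InnerProductSpace ℝ E] [FiniteDimensional ℝ E]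
  [NormedAddCommGroup F] [InnerProductSpace ℝ F] [FiniteDimensional ℝ F]

lemma pinv_comp_eq_id (A : E →L[ℝ] F) (hA : Surjective A) :
    A.comp (pinv A) = ContinuousLinearMap.id ℝ F := by
  classical
  set G := A.comp (ContinuousLinearMap.adjoint A) with hG
  have hGzero : ∀ x, G x = 0 → x = 0 := by
    intro x hx
    have h1 : (inner ℝ (ContinuousLinearMap.adjoint A x) (ContinuousLinearMap.adjoint A x) : ℝ) = 0 := by
      rw [ContinuousLinearMap.adjoint_inner_left]
      have : A ((ContinuousLinearMap.adjoint A) x) = G x := rfl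
      rw [this, hx, inner_zero_right]
    have hAx : ContinuousLinearMap.adjoint A x = 0 := inner_self_eq_zero.mp h1
    obtain ⟨v, hv⟩ := hA x
    have h2 : (inner ℝ x x : ℝ) = 0 := by
      have h3 : (inner ℝ (ContinuousLinearMap.adjoint A x) v : ℝ) = inner ℝ x x := by
        rw [ContinuousLinearMap.adjoint_inner_left, hv]
      rw [← h3, hAx, inner_zero_left]
    exact inner_self_eq_zero.mp h2
  have hGinj : Injective G := by
    intro a b hab
    have := hGzero (a - b) (by rw [map_sub, hab, sub_self])
    exact sub_eq_zero.mp this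
  have hGsurj : Surjective G := by
    have := (LinearMap.injective_iff_surjective (f := (G : F →ₗ[ℝ] F))).mp hGinj
    exact this
  set e : F ≃L[ℝ] F :=
    (LinearEquiv.ofBijective (G : F →ₗ[ℝ] F) ⟨hGinj, hGsurj⟩).toContinuousLinearEquiv with he
  have hecoe : ∀ y, e y = G y := fun y => rfl
  have hunit : IsUnit G := by
    refine ⟨⟨G, e.symm.toContinuousLinearMap, ?_, ?_⟩, rfl⟩
    · ext x
      have h1 : G (e.symm x) = e (e.symm x) := (hecoe _).symm
      simp only [ContinuousLinearMap.mul_apply, ContinuousLinearMap.one_apply,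
        ContinuousLinearEquiv.coe_coe]
      rw [h1, e.apply_symm_apply]
    · ext x
      have h1 : G x = e x := (hecoe _).symm
      simp only [ContinuousLinearMap.mul_apply, ContinuousLinearMap.one_apply,
        ContinuousLinearEquiv.coe_coe]
      rw [h1, e.symm_apply_apply]
  have hinv : G.comp (Ring.inverse G) = ContinuousLinearMap.id ℝ F := by
    rw [← ContinuousLinearMap.mul_def, Ring.mul_inverse_cancel _ hunit]
    rfl
  show A.comp ((ContinuousLinearMap.adjoint A).comp (Ring.inverse G)) = ContinuousLinearMap.id ℝ F
  rw [← ContinuousLinearMap.comp_assoc]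
  exact hinv

end Aux

lemma norm_derivSeries_le {E F : Type*} [NormedAddCommGroup E] [NormedSpace ℝ E]
    [NormedAddCommGroup F] [NormedSpace ℝ F] (q : FormalMultilinearSeries ℝ E F) (k : ℕ) :
    ‖q.derivSeries k‖ ≤ ((k : ℝ) + 1) * ‖q (1 + k)‖ := by
  have h0 : q.derivSeries k =
      (continuousMultilinearCurryFin1 ℝ E F : (E [×1]→L[ℝ] F) →L[ℝ] E →L[ℝ] F).compContinuousMultilinearMap
        (q.changeOriginSeries 1 k) := rfl
  have h1 : ‖q.derivSeries k‖ ≤ ‖q.changeOriginSeries 1 k‖ := by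
    rw [h0]
    refine ContinuousMultilinearMap.opNorm_le_bound (ContinuousMultilinearMap.opNorm_nonneg _) (fun m => ?_)
    calc ‖(continuousMultilinearCurryFin1 ℝ E F :
          (E [×1]→L[ℝ] F) →L[ℝ] E →L[ℝ] F).compContinuousMultilinearMap
          (q.changeOriginSeries 1 k) m‖
        = ‖q.changeOriginSeries 1 k m‖ := by
          rw [ContinuousLinearMap.compContinuousMultilinearMap_coe]
          exact (continuousMultilinearCurryFin1 ℝ E F).norm_map _
      _ ≤ ‖q.changeOriginSeries 1 k‖ * ∏ i, ‖m i‖ :=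
          ContinuousMultilinearMap.le_opNorm _ _
  refine le_trans h1 ?_
  have hcard : Fintype.card { s : Finset (Fin (1 + k)) // s.card = k } = k + 1 := by
    rw [Fintype.card_subtype, ← Finset.powerset_univ, ← Finset.powersetCard_eq_filter,
      Finset.card_powersetCard, ← Fintype.card, Fintype.card_fin, add_comm,
      Nat.choose_succ_self_right]
  have h2 : ‖q.changeOriginSeries 1 k‖ ≤ ((k : ℝ) + 1) * ‖q (1 + k)‖ := by
    have := q.nnnorm_changeOriginSeries_le_tsum 1 k
    have h3 : (∑' _ : { s : Finset (Fin (1 + k)) // s.card = k }, ‖q (1 + k)‖₊)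
        = (k + 1 : ℕ) • ‖q (1 + k)‖₊ := by
      rw [tsum_fintype]
      simp [hcard]
    rw [h3] at this
    have h4 : ‖q.changeOriginSeries 1 k‖ ≤ ((k + 1 : ℕ) : ℝ) * ‖q (1 + k)‖ := by
      have := (NNReal.coe_le_coe).mpr this
      push_cast at this
      simpa [NNReal.smul_def] using this
    push_cast at h4
    exact h4
  exact h2

set_option maxHeartbeats 2000000 in
/-- (Claim 1 in the proof of Proposition `M2`.) If ‖z‖·γ(f,p) < 1 − √2/2,
then the restriction of Df(p+z) to H₂ = (ker Df(p))^⊥ is a linear isomorphism onto ℝ^m. -/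
theorem statement15 {n m : ℕ} (hm : m ≤ n + 1)
    (f : EuclideanSpace ℝ (Fin (n + 1)) → EuclideanSpace ℝ (Fin m))
    (hf : AnalyticOnNhd ℝ f Set.univ)
    (p : EuclideanSpace ℝ (Fin (n + 1)))
    (hsurj : Surjective ⇑(fderiv ℝ f p))
    (H₂ : Submodule ℝ (EuclideanSpace ℝ (Fin (n + 1))))
    (hH₂ : H₂ = (LinearMap.ker (fderiv ℝ f p).toLinearMap)ᗮ)
    (z : EuclideanSpace ℝ (Fin (n + 1)))
    (hz : ENNReal.ofReal ‖z‖ * gammaE f p < ENNReal.ofReal (1 - Real.sqrt 2 / 2)) :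
    Bijective (fun v : H₂ => fderiv ℝ f (p + z) (v : EuclideanSpace ℝ (Fin (n + 1)))) := by
  classical
  set A := fderiv ℝ f p with hAdef
  have hcomp : A.comp (pinv A) = ContinuousLinearMap.id ℝ _ := pinv_comp_eq_id A hsurj
  have hAid : ∀ y, A (pinv A y) = y := by
    intro y
    have := congrArg (fun T => T y) hcomp
    simpa using this
  have hdf : ∀ x, DifferentiableAt ℝ f x := fun x => (hf x trivial).differentiableAt
  set f₁ : EuclideanSpace ℝ (Fin (n + 1)) → EuclideanSpace ℝ (Fin (n + 1)) :=
    fun x => pinv A (f x) with hf₁def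
  have hf₁ : AnalyticOnNhd ℝ f₁ Set.univ := (pinv A).comp_analyticOnNhd hf
  have hfderiv₁ : ∀ x, fderiv ℝ f₁ x = (pinv A).comp (fderiv ℝ f x) := by
    intro x
    have h1 : fderiv ℝ (⇑(pinv A) ∘ f) x = (fderiv ℝ (⇑(pinv A)) (f x)).comp (fderiv ℝ f x) :=
      fderiv_comp x (pinv A).differentiableAt (hdf x)
    have h2 : fderiv ℝ f₁ x = fderiv ℝ (⇑(pinv A) ∘ f) x := rfl
    rw [h2]
    simpa [ContinuousLinearMap.fderiv] using h1
  -- main quantitative estimate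
  have key : ‖(pinv A).comp (fderiv ℝ f (p + z)) - (pinv A).comp A‖ < 1 := by
    rcases eq_or_ne z 0 with rfl | hz0
    · simp [hAdef]
    have hzpos : 0 < ‖z‖ := norm_pos_iff.mpr hz0
    have hγne : gammaE f p ≠ ⊤ := by
      intro h
      rw [h, ENNReal.mul_top (ne_of_gt (ENNReal.ofReal_pos.mpr hzpos))] at hz
      exact (lt_irrefl _ (hz.trans_le le_top)).elim
    set γ : ℝ := (gammaE f p).toReal with hγdef
    have hγ0 : 0 ≤ γ := ENNReal.toReal_nonneg
    have hsqrt2 : (0 : ℝ) < Real.sqrt 2 := Real.sqrt_pos.mpr (by norm_num)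
    have hsq : Real.sqrt 2 ^ 2 = 2 := Real.sq_sqrt (by norm_num)
    set u : ℝ := ‖z‖ * γ with hu_def
    have hu0 : 0 ≤ u := mul_nonneg (norm_nonneg z) hγ0
    have huc : u < 1 - Real.sqrt 2 / 2 := by
      have h1 := hz
      rw [← ENNReal.ofReal_toReal hγne, ← ENNReal.ofReal_mul (norm_nonneg z)] at h1
      exact (ENNReal.ofReal_lt_ofReal_iff_of_nonneg hu0).mp h1
    have hu1 : u < 1 := by nlinarith
    -- coefficient bounds
    have hgseq : ∀ k, 2 ≤ k → gammaSeq f p k ≤ γ := by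
      intro k hk
      have h1 : ENNReal.ofReal (gammaSeq f p k) ≤ gammaE f p :=
        le_iSup₂ (f := fun k (_ : 2 ≤ k) => ENNReal.ofReal (gammaSeq f p k)) k hk
      have h2 := ENNReal.toReal_mono hγne h1
      have h3 : 0 ≤ gammaSeq f p k :=
        Real.rpow_nonneg (div_nonneg (norm_nonneg _) (Nat.cast_nonneg _)) _
      rwa [ENNReal.toReal_ofReal h3] at h2
    obtain ⟨Q, hQdef⟩ : ∃ Q : FormalMultilinearSeries ℝ (EuclideanSpace ℝ (Fin (n + 1)))
        (EuclideanSpace ℝ (Fin (n + 1))),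
        Q = fun k => (k.factorial : ℝ)⁻¹ • iteratedFDeriv ℝ k f₁ p := ⟨_, rfl⟩
    have hiFD : ∀ k : ℕ, iteratedFDeriv ℝ k f₁ p =
        (pinv A).compContinuousMultilinearMap (iteratedFDeriv ℝ k f p) := by
      intro k
      have hcd : ContDiff ℝ (⊤ : WithTop ℕ∞) f := hf.contDiff
      exact (pinv A).iteratedFDeriv_comp_left hcd.contDiffAt le_top
    have hQnorm : ∀ k, 2 ≤ k → ‖Q k‖ ≤ γ ^ (k - 1) := by
      intro k hk
      have hx0 : 0 ≤ ‖(pinv A).compContinuousMultilinearMap (iteratedFDeriv ℝ k f p)‖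
          / (k.factorial : ℝ) := div_nonneg (norm_nonneg _) (Nat.cast_nonneg _)
      have hkfac : (0 : ℝ) < (k.factorial : ℝ) := by
        exact_mod_cast Nat.factorial_pos k
      have hQk : ‖Q k‖ ≤ ‖(pinv A).compContinuousMultilinearMap (iteratedFDeriv ℝ k f p)‖
          / (k.factorial : ℝ) := by
        refine ContinuousMultilinearMap.opNorm_le_bound hx0 (fun v => ?_)
        have hval : Q k v = (k.factorial : ℝ)⁻¹ •
            ((pinv A).compContinuousMultilinearMap (iteratedFDeriv ℝ k f p) v) := by
          rw [hQdef]
          simp [hiFD k]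
        rw [hval, norm_smul, Real.norm_eq_abs, abs_inv, Nat.abs_cast, div_mul_eq_mul_div,
          div_eq_inv_mul, mul_le_mul_iff_right₀ (by positivity)]
        exact ContinuousMultilinearMap.le_opNorm _ _
      have hkr : (0 : ℝ) < (k : ℝ) - 1 := by
        have : (2 : ℝ) ≤ (k : ℝ) := by exact_mod_cast hk
        linarith
      have h1 := Real.rpow_le_rpow (Real.rpow_nonneg hx0 _) (hgseq k hk) (le_of_lt hkr)
      rw [← Real.rpow_mul hx0, one_div, inv_mul_cancel₀ (ne_of_gt hkr), Real.rpow_one] at h1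
      have h2 : ((k : ℝ) - 1) = ((k - 1 : ℕ) : ℝ) := by
        have : (1 : ℕ) ≤ k := by omega
        push_cast [this]
        ring
      rw [h2, Real.rpow_natCast] at h1
      exact le_trans hQk h1
    -- radius bound
    have hrad : ∀ t : ℝ, 0 ≤ t → t * γ ≤ 1 → ENNReal.ofReal t ≤ Q.radius := by
      intro t ht htγ
      have hcoe : ((t.toNNReal : ℝ≥0) : ℝ) = t := Real.coe_toNNReal t ht
      refine Q.le_radius_of_bound (‖Q 0‖ + ‖Q 1‖ * t + t) ?_
      intro k
      have hQ0 : 0 ≤ ‖Q 0‖ := norm_nonneg _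
      have hQ1 : 0 ≤ ‖Q 1‖ * t := mul_nonneg (norm_nonneg _) ht
      by_cases hk2 : 2 ≤ k
      case neg =>
        interval_cases k
        · simp only [pow_zero, mul_one]
          linarith
        · simp only [pow_one, hcoe]
          nlinarith
      obtain ⟨k, rfl⟩ : ∃ j, k = j + 2 := ⟨k - 2, by omega⟩
      · rw [hcoe]
        have h1 : ‖Q (k + 2)‖ ≤ γ ^ (k + 1) := by
          have := hQnorm (k + 2) (by omega)
          simpa using this
        have h2 : ‖Q (k + 2)‖ * t ^ (k + 2) ≤ (γ * t) ^ (k + 1) * t := by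
          have hexp : t ^ (k + 2) = t ^ (k + 1) * t := by ring
          rw [hexp, mul_pow, ← mul_assoc]
          have := mul_le_mul_of_nonneg_right h1 (pow_nonneg ht (k + 1))
          nlinarith [pow_nonneg ht (k + 1), pow_nonneg hγ0 (k + 1),
            mul_le_mul_of_nonneg_right this ht]
        have h3 : (γ * t) ^ (k + 1) ≤ 1 := by
          apply pow_le_one₀ (mul_nonneg hγ0 ht)
          rw [mul_comm]; exact htγ
        nlinarith [mul_le_mul_of_nonneg_right h3 ht]
    obtain ⟨ρ, hρpos, hρz, hρrad⟩ :
        ∃ ρ : ℝ, 0 < ρ ∧ ‖z‖ < ρ ∧ ENNReal.ofReal ρ ≤ Q.radius := by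
      rcases eq_or_lt_of_le hγ0 with hγ0' | hγpos
      · exact ⟨‖z‖ + 1, by positivity, by linarith,
          hrad _ (by positivity) (by rw [← hγ0']; ring_nf; norm_num)⟩
      · refine ⟨1 / γ, by positivity, ?_, hrad _ (by positivity) (by
          rw [div_mul_cancel₀]; exact ne_of_gt hγpos)⟩
        rw [lt_div_iff₀ hγpos]
        exact hu1
    have hzrad : (‖z‖₊ : ℝ≥0∞) < Q.radius := by
      calc (‖z‖₊ : ℝ≥0∞) = ENNReal.ofReal ‖z‖ := (ofReal_norm z).symm
        _ < ENNReal.ofReal ρ := (ENNReal.ofReal_lt_ofReal_iff hρpos).mpr hρz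
        _ ≤ Q.radius := hρrad
    have hradpos : 0 < Q.radius := lt_of_le_of_lt zero_le' hzrad
    obtain ⟨pser, hpser⟩ := hf₁ p trivial
    obtain ⟨r₁, hr₁⟩ := hpser
    have hball : HasFPowerSeriesOnBall f₁ Q p (min r₁ Q.radius) := by
      refine ⟨min_le_right _ _, lt_min hr₁.r_pos hradpos, ?_⟩
      intro y hy
      have hy1 : y ∈ EMetric.ball (0 : EuclideanSpace ℝ (Fin (n + 1))) r₁ :=
        EMetric.ball_subset_ball (min_le_left _ _) hy
      have h1 := hr₁.hasSum_iteratedFDeriv hy1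
      convert h1 using 2 with k
      rw [hQdef]
      simp
    obtain ⟨g, hgdef⟩ : ∃ g : EuclideanSpace ℝ (Fin (n + 1)) → EuclideanSpace ℝ (Fin (n + 1)),
        g = fun x => Q.sum (x - p) := ⟨_, rfl⟩
    have hgball : HasFPowerSeriesOnBall g Q p Q.radius := by
      have h0 := (Q.hasFPowerSeriesOnBall hradpos).comp_sub p
      rw [hgdef]
      simpa using h0
    have hsubset : Metric.ball p ρ ⊆ EMetric.ball p Q.radius := by
      intro x hx
      change edist x p < Q.radius
      rw [edist_dist]
      exact lt_of_lt_of_le ((ENNReal.ofReal_lt_ofReal_iff hρpos).mpr hx) hρrad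
    have hEqOn : Set.EqOn f₁ g (Metric.ball p ρ) := by
      have hf₁U : AnalyticOnNhd ℝ f₁ (Metric.ball p ρ) := fun x _ => hf₁ x trivial
      have hgU : AnalyticOnNhd ℝ g (Metric.ball p ρ) := fun x hx =>
        hgball.analyticAt_of_mem (hsubset hx)
      have hfg : f₁ =ᶠ[𝓝 p] g := by
        have hmem : EMetric.ball p (min r₁ Q.radius) ∈ 𝓝 p :=
          EMetric.isOpen_ball.mem_nhds (EMetric.mem_ball_self hball.r_pos)
        filter_upwards [hmem] with x hx
        have hx' : x - p ∈ EMetric.ball (0 : EuclideanSpace ℝ (Fin (n + 1)))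
            (min r₁ Q.radius) := by
          change edist x p < min r₁ Q.radius at hx
          change edist (x - p) 0 < min r₁ Q.radius
          rwa [edist_dist, dist_zero_right, ← dist_eq_norm, ← edist_dist]
        have h1 := hball.sum hx'
        rw [add_sub_cancel] at h1
        rw [hgdef]
        exact h1
      exact AnalyticOnNhd.eqOn_of_preconnected_of_eventuallyEq hf₁U hgU
        (convex_ball p ρ).isPreconnected (mem_ball_self hρpos) hfg
    have hpz_mem : p + z ∈ Metric.ball p ρ := by
      rw [mem_ball_iff_norm]
      simpa using hρz
    have hfderiv_eq : fderiv ℝ f₁ (p + z) = fderiv ℝ g (p + z) :=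
      (hEqOn.eventuallyEq_of_mem (Metric.isOpen_ball.mem_nhds hpz_mem)).fderiv_eq
    have hz0mem : z ∈ EMetric.ball (0 : EuclideanSpace ℝ (Fin (n + 1))) Q.radius :=
      mem_emetric_ball_zero_iff.mpr hzrad
    have hdsum : HasSum (fun k => Q.derivSeries k (fun _ => z)) (fderiv ℝ g (p + z)) :=
      hgball.fderiv.hasSum hz0mem
    -- identify the zeroth term of the derivative series
    have hc0 : Q.derivSeries 0 (fun _ => z) = (pinv A).comp A := by
      have h0mem : (0 : EuclideanSpace ℝ (Fin (n + 1))) ∈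
          EMetric.ball (0 : EuclideanSpace ℝ (Fin (n + 1))) Q.radius :=
        EMetric.mem_ball_self hradpos
      have h0sum := hgball.fderiv.hasSum h0mem
      rw [add_zero] at h0sum
      have hsingle : HasSum
          (fun k => Q.derivSeries k (fun _ => (0 : EuclideanSpace ℝ (Fin (n + 1)))))
          (Q.derivSeries 0 (fun _ => (0 : EuclideanSpace ℝ (Fin (n + 1))))) := by
        refine hasSum_single 0 (fun k hk => ?_)
        exact (Q.derivSeries k).map_coord_zero ⟨0, Nat.pos_of_ne_zero hk⟩ rfl
      have h1 : fderiv ℝ g p =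
          Q.derivSeries 0 (fun _ => (0 : EuclideanSpace ℝ (Fin (n + 1)))) :=
        h0sum.unique hsingle
      have h2 : fderiv ℝ g p = fderiv ℝ f₁ p :=
        ((hEqOn.eventuallyEq_of_mem
          (Metric.isOpen_ball.mem_nhds (mem_ball_self hρpos))).fderiv_eq).symm
      have h3 : (fun _ : Fin 0 => z) = (fun _ : Fin 0 => (0 : EuclideanSpace ℝ (Fin (n + 1)))) :=
        funext fun i => i.elim0
      rw [h3, ← h1, h2, hfderiv₁ p, ← hAdef]
    have hshift : HasSum (fun k => Q.derivSeries (k + 1) (fun _ => z))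
        (fderiv ℝ g (p + z) - (pinv A).comp A) := by
      have h1 := (hasSum_nat_add_iff' (f := fun k => Q.derivSeries k (fun _ => z)) 1).mpr hdsum
      simpa [hc0] using h1
    -- term bounds
    have hb : ∀ k : ℕ, ‖Q.derivSeries (k + 1) (fun _ : Fin (k + 1) => z)‖
        ≤ ((k : ℝ) + 2) * u ^ (k + 1) := by
      intro k
      have h1 : ‖Q.derivSeries (k + 1) (fun _ : Fin (k + 1) => z)‖
          ≤ ‖Q.derivSeries (k + 1)‖ * ‖z‖ ^ (k + 1) := by
        have := ContinuousMultilinearMap.le_opNorm (Q.derivSeries (k + 1)) (fun _ => z)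
        simpa using this
      have h2 : ‖Q.derivSeries (k + 1)‖ ≤ (((k + 1 : ℕ) : ℝ) + 1) * ‖Q (1 + (k + 1))‖ :=
        norm_derivSeries_le Q (k + 1)
      have hcast : (((k + 1 : ℕ) : ℝ) + 1) = ((k : ℝ) + 1) + 1 := by push_cast; ring
      rw [hcast] at h2
      have h3 : ‖Q (1 + (k + 1))‖ ≤ γ ^ (k + 1) := by
        have h4 := hQnorm (1 + (k + 1)) (by omega)
        have h5 : 1 + (k + 1) - 1 = k + 1 := by omega
        rwa [h5] at h4
      have hz0' : (0 : ℝ) ≤ ‖z‖ ^ (k + 1) := pow_nonneg (norm_nonneg z) _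
      have hγ0' : (0 : ℝ) ≤ γ ^ (k + 1) := pow_nonneg hγ0 _
      calc ‖Q.derivSeries (k + 1) (fun _ : Fin (k + 1) => z)‖
          ≤ ‖Q.derivSeries (k + 1)‖ * ‖z‖ ^ (k + 1) := h1
        _ ≤ ((((k : ℝ) + 1) + 1) * ‖Q (1 + (k + 1))‖) * ‖z‖ ^ (k + 1) := by
            apply mul_le_mul_of_nonneg_right h2 hz0'
        _ ≤ ((((k : ℝ) + 1) + 1) * γ ^ (k + 1)) * ‖z‖ ^ (k + 1) := by
            have hk1 : (0 : ℝ) ≤ ((k : ℝ) + 1) + 1 := by positivity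
            apply mul_le_mul_of_nonneg_right
              (mul_le_mul_of_nonneg_left h3 hk1) hz0'
        _ = ((k : ℝ) + 2) * u ^ (k + 1) := by
            rw [hu_def, mul_pow]
            push_cast
            ring
    -- value of the majorant series
    have hgeo : HasSum (fun k : ℕ => ((k : ℝ) + 1) * u ^ k)
        (u / (1 - u) ^ 2 + (1 - u)⁻¹) := by
      have h1 : HasSum (fun k : ℕ => (k : ℝ) * u ^ k) (u / (1 - u) ^ 2) :=
        hasSum_coe_mul_geometric_of_norm_lt_one
          (by rwa [Real.norm_eq_abs, abs_of_nonneg hu0])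
      have h2 : HasSum (fun k : ℕ => u ^ k) (1 - u)⁻¹ :=
        hasSum_geometric_of_lt_one hu0 hu1
      have h3 := h1.add h2
      convert h3 using 2 with k
      ring
    have hS : HasSum (fun k : ℕ => ((k : ℝ) + 2) * u ^ (k + 1))
        (u / (1 - u) ^ 2 + (1 - u)⁻¹ - 1) := by
      have h1 := (hasSum_nat_add_iff' (f := fun k : ℕ => ((k : ℝ) + 1) * u ^ k) 1).mpr hgeo
      have h2 : ∀ k : ℕ, (((k + 1) : ℕ) : ℝ) + 1 = (k : ℝ) + 2 := by
        intro k; push_cast; ring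
      simp only [Finset.range_one, Finset.sum_singleton, Nat.cast_zero, zero_add, pow_zero,
        mul_one, Nat.cast_add, Nat.cast_one] at h1
      convert h1 using 2 with k
      · rfl
      push_cast
      ring
    have hsummable : Summable
        (fun k : ℕ => ‖Q.derivSeries (k + 1) (fun _ : Fin (k + 1) => z)‖) :=
      Summable.of_nonneg_of_le (fun _ => norm_nonneg _) hb hS.summable
    have hnorm1 : ‖fderiv ℝ g (p + z) - (pinv A).comp A‖
        ≤ u / (1 - u) ^ 2 + (1 - u)⁻¹ - 1 := by
      rw [← hshift.tsum_eq]
      refine le_trans (norm_tsum_le_tsum_norm hsummable) ?_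
      rw [← hS.tsum_eq]
      exact Summable.tsum_le_tsum hb hsummable hS.summable
    have hfinal : u / (1 - u) ^ 2 + (1 - u)⁻¹ - 1 < 1 := by
      have hw : Real.sqrt 2 / 2 < 1 - u := by linarith
      have hwpos : (0 : ℝ) < 1 - u := lt_trans (by positivity) hw
      have hsum2 : u / (1 - u) ^ 2 + (1 - u)⁻¹ = ((1 - u) ^ 2)⁻¹ := by
        field_simp
        ring
      rw [hsum2]
      have h2 : (1 : ℝ) / 2 < (1 - u) ^ 2 := by nlinarith
      have h3 : ((1 - u) ^ 2)⁻¹ < 2 := by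
        rw [← one_div, div_lt_iff₀ (by positivity)]
        nlinarith
      linarith
    calc ‖(pinv A).comp (fderiv ℝ f (p + z)) - (pinv A).comp A‖
        = ‖fderiv ℝ g (p + z) - (pinv A).comp A‖ := by
          rw [← hfderiv_eq, hfderiv₁ (p + z)]
      _ ≤ u / (1 - u) ^ 2 + (1 - u)⁻¹ - 1 := hnorm1
      _ < 1 := hfinal
  
  -- projection property
  have hproj : ∀ v ∈ H₂, (pinv A) (A v) = v := by
    intro v hv
    rw [hH₂] at hv
    set w := (pinv A) (A v) with hw
    have hw1 : v - w ∈ LinearMap.ker A.toLinearMap := by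
      rw [LinearMap.mem_ker, ContinuousLinearMap.coe_coe, map_sub, hw, hAid, sub_self]
    have hw2 : w ∈ (LinearMap.ker A.toLinearMap)ᗮ := by
      rw [Submodule.mem_orthogonal]
      intro u hu
      have hu0 : A u = 0 := LinearMap.mem_ker.mp hu
      have hwrepr : w = ContinuousLinearMap.adjoint A
          ((Ring.inverse (A.comp (ContinuousLinearMap.adjoint A))) (A v)) := rfl
      rw [hwrepr, real_inner_comm, ContinuousLinearMap.adjoint_inner_left, hu0,
        inner_zero_right]
    have hvw : v - w ∈ (LinearMap.ker A.toLinearMap)ᗮ := sub_mem hv hw2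
    have hbot : v - w ∈ (⊥ : Submodule ℝ (EuclideanSpace ℝ (Fin (n + 1)))) := by
      have hdisj := Submodule.orthogonal_disjoint (LinearMap.ker A.toLinearMap)
      exact hdisj.le_bot ⟨hw1, hvw⟩
    have : v - w = 0 := (Submodule.mem_bot ℝ).mp hbot
    have := sub_eq_zero.mp this
    exact this.symm
  -- injectivity on H₂
  have hinj : ∀ v ∈ H₂, fderiv ℝ f (p + z) v = 0 → v = 0 := by
    intro v hv hBv
    by_contra hv0
    have h1 : ((pinv A).comp (fderiv ℝ f (p + z)) - (pinv A).comp A) v = -v := by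
      simp [ContinuousLinearMap.sub_apply, ContinuousLinearMap.comp_apply, hBv, hproj v hv]
    have h2 : ‖v‖ ≤ ‖(pinv A).comp (fderiv ℝ f (p + z)) - (pinv A).comp A‖ * ‖v‖ := by
      calc ‖v‖ = ‖-v‖ := (norm_neg v).symm
        _ = ‖((pinv A).comp (fderiv ℝ f (p + z)) - (pinv A).comp A) v‖ := by rw [h1]
        _ ≤ _ := ContinuousLinearMap.le_opNorm _ _
    have h3 : 0 < ‖v‖ := norm_pos_iff.mpr hv0
    nlinarith
  have hInj : Injective (fun v : H₂ => fderiv ℝ f (p + z) (v : EuclideanSpace ℝ (Fin (n + 1)))) := by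
    intro v w hvw
    apply Subtype.ext
    have hsub : (v : EuclideanSpace ℝ (Fin (n + 1))) - w ∈ H₂ := sub_mem v.2 w.2
    have h0 : fderiv ℝ f (p + z) ((v : EuclideanSpace ℝ (Fin (n + 1))) - w) = 0 := by
      rw [map_sub]
      simpa [sub_eq_zero] using hvw
    exact sub_eq_zero.mp (hinj _ hsub h0)
  refine ⟨hInj, ?_⟩
  -- dimension count
  have hrank : Module.finrank ℝ H₂ = Module.finrank ℝ (EuclideanSpace ℝ (Fin m)) := by
    have h1 := Submodule.finrank_add_finrank_orthogonal (K := LinearMap.ker A.toLinearMap)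
    have h2 := LinearMap.finrank_range_add_finrank_ker
      (A : EuclideanSpace ℝ (Fin (n + 1)) →ₗ[ℝ] EuclideanSpace ℝ (Fin m))
    have h3 : LinearMap.range (A : EuclideanSpace ℝ (Fin (n + 1)) →ₗ[ℝ]
        EuclideanSpace ℝ (Fin m)) = ⊤ := LinearMap.range_eq_top.mpr hsurj
    rw [h3] at h2
    rw [finrank_top] at h2
    have h4 : Module.finrank ℝ (EuclideanSpace ℝ (Fin m)) = m := finrank_euclideanSpace_fin
    have h5 : Module.finrank ℝ (EuclideanSpace ℝ (Fin (n + 1))) = n + 1 :=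
      finrank_euclideanSpace_fin
    have h6 : LinearMap.ker (A : EuclideanSpace ℝ (Fin (n + 1)) →ₗ[ℝ]
        EuclideanSpace ℝ (Fin m)) = LinearMap.ker A.toLinearMap := by
      ext x
      simp [LinearMap.mem_ker]
    rw [h6] at h2
    rw [hH₂]
    omega
  have hL := (LinearMap.injective_iff_surjective_of_finrank_eq_finrank
      (f := ((fderiv ℝ f (p + z) : EuclideanSpace ℝ (Fin (n + 1)) →ₗ[ℝ]
        EuclideanSpace ℝ (Fin m)).domRestrict H₂)) hrank)
  have : Injective ⇑((fderiv ℝ f (p + z) : EuclideanSpace ℝ (Fin (n + 1)) →ₗ[ℝ]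
      EuclideanSpace ℝ (Fin m)).domRestrict H₂) := hInj
  exact hL.mp this
end
end

section
/- Let ℝ^{n+1} = H₁ ⊕ H₃ be an orthogonal direct sum decomposition, let φ : H₁ → H₃ be a linear map, and let E := {x + φ(x) : x ∈ H₁} be its graph. Then: (i) E^⊥ = {−φ*(v) + v : v ∈ H₃}, where φ* : H₃ → H₁ is the adjoint of φ; (ii) if φ ≠ 0, p, u ∈ H₃, x ∈ H₁, and w ∈ H₃ ∩ ((p + x + u) + E^⊥), then ‖w − p‖ ≥ ‖x‖/‖φ‖ − ‖u‖, where ‖φ‖ is the operator norm. -/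
open Function Metric

open scoped RealInnerProductSpace

set_option maxHeartbeats 1000000

noncomputable section

/-- (Lemma `M4`.) For the graph E of a linear map φ : H₁ → H₃ (where
ℝ^{n+1} = H₁ ⊥ H₃): (i) E^⊥ = {−φ*(v) + v : v ∈ H₃}; (ii) if φ ≠ 0, p, u ∈ H₃, x ∈ H₁ and
w ∈ H₃ ∩ ((p + x + u) + E^⊥), then ‖w − p‖ ≥ ‖x‖/‖φ‖ − ‖u‖. -/
theorem statement18 {n : ℕ} (H₁ H₃ : Submodule ℝ (EuclideanSpace ℝ (Fin (n + 1))))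
    (hH₃ : H₃ = H₁ᗮ)
    (φ : H₁ →L[ℝ] H₃)
    (E : Submodule ℝ (EuclideanSpace ℝ (Fin (n + 1))))
    (hE : E = LinearMap.range
      (((H₁.subtypeL + H₃.subtypeL.comp φ) : H₁ →L[ℝ] EuclideanSpace ℝ (Fin (n + 1))) :
        H₁ →ₗ[ℝ] EuclideanSpace ℝ (Fin (n + 1)))) :
    (Eᗮ : Set (EuclideanSpace ℝ (Fin (n + 1)))) =
      {u | ∃ v : H₃, u = (v : EuclideanSpace ℝ (Fin (n + 1)))
        - ((ContinuousLinearMap.adjoint φ) v : EuclideanSpace ℝ (Fin (n + 1)))} ∧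
    (φ ≠ 0 → ∀ p u x w : EuclideanSpace ℝ (Fin (n + 1)),
      p ∈ H₃ → u ∈ H₃ → x ∈ H₁ → w ∈ H₃ →
      (∃ e ∈ Eᗮ, w = p + x + u + e) →
      ‖x‖ / ‖φ‖ - ‖u‖ ≤ ‖w - p‖) := by
  have horth : ∀ a ∈ H₁, ∀ b ∈ H₃, ⟪a, b⟫ = 0 := by
    intro a ha b hb
    rw [hH₃] at hb
    exact (Submodule.mem_orthogonal H₁ b).mp hb a ha
  have hadj : ∀ (a : H₁) (v : H₃),
      ⟪(φ a : EuclideanSpace ℝ (Fin (n + 1))), (v : EuclideanSpace ℝ (Fin (n + 1)))⟫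
        = ⟪(a : EuclideanSpace ℝ (Fin (n + 1))),
            ((ContinuousLinearMap.adjoint φ) v : EuclideanSpace ℝ (Fin (n + 1)))⟫ := by
    intro a v
    have h1 : ⟪(φ a : EuclideanSpace ℝ (Fin (n + 1))), (v : EuclideanSpace ℝ (Fin (n + 1)))⟫
        = ⟪φ a, v⟫ := rfl
    have h2 : ⟪(a : EuclideanSpace ℝ (Fin (n + 1))),
        ((ContinuousLinearMap.adjoint φ) v : EuclideanSpace ℝ (Fin (n + 1)))⟫
        = ⟪a, (ContinuousLinearMap.adjoint φ) v⟫ := rfl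
    rw [h1, h2, ContinuousLinearMap.adjoint_inner_right]
  have part1 : (Eᗮ : Set (EuclideanSpace ℝ (Fin (n + 1)))) =
      {u | ∃ v : H₃, u = (v : EuclideanSpace ℝ (Fin (n + 1)))
        - ((ContinuousLinearMap.adjoint φ) v : EuclideanSpace ℝ (Fin (n + 1)))} := by
    ext e
    simp only [SetLike.mem_coe, Set.mem_setOf_eq]
    constructor
    · intro he
      obtain ⟨y, hy, z, hz, hezy⟩ := H₁.exists_add_mem_mem_orthogonal e
      rw [← hH₃] at hz
      refine ⟨⟨z, hz⟩, ?_⟩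
      set v : H₃ := ⟨z, hz⟩ with hv
      set Av : EuclideanSpace ℝ (Fin (n + 1)) :=
        ((ContinuousLinearMap.adjoint φ) v : EuclideanSpace ℝ (Fin (n + 1))) with hAv
      set a : H₁ := ⟨y + Av, H₁.add_mem hy ((ContinuousLinearMap.adjoint φ) v).2⟩ with ha
      have hmem : (a : EuclideanSpace ℝ (Fin (n + 1)))
          + (φ a : EuclideanSpace ℝ (Fin (n + 1))) ∈ E := by
        rw [hE]
        exact ⟨a, rfl⟩
      have key : ⟪((a : EuclideanSpace ℝ (Fin (n + 1)))
          + (φ a : EuclideanSpace ℝ (Fin (n + 1)))), e⟫ = 0 :=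
        (Submodule.mem_orthogonal E e).mp he _ hmem
      have expand : ⟪((a : EuclideanSpace ℝ (Fin (n + 1)))
            + (φ a : EuclideanSpace ℝ (Fin (n + 1)))), e⟫
          = ⟪(a : EuclideanSpace ℝ (Fin (n + 1))), y⟫
            + ⟪(a : EuclideanSpace ℝ (Fin (n + 1))), z⟫
            + ⟪(φ a : EuclideanSpace ℝ (Fin (n + 1))), y⟫
            + ⟪(φ a : EuclideanSpace ℝ (Fin (n + 1))), z⟫ := by
        rw [hezy, inner_add_left, inner_add_right, inner_add_right]; ring
      have e1 : ⟪(a : EuclideanSpace ℝ (Fin (n + 1))), z⟫ = 0 := horth _ a.2 _ hz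
      have e2 : ⟪(φ a : EuclideanSpace ℝ (Fin (n + 1))), y⟫ = 0 := by
        rw [real_inner_comm]; exact horth _ hy _ (φ a).2
      have e3 : ⟪(φ a : EuclideanSpace ℝ (Fin (n + 1))), z⟫
          = ⟪(a : EuclideanSpace ℝ (Fin (n + 1))), Av⟫ := hadj a v
      have e5 : (a : EuclideanSpace ℝ (Fin (n + 1))) = y + Av := rfl
      have e4 : ⟪(a : EuclideanSpace ℝ (Fin (n + 1))), y⟫
          + ⟪(a : EuclideanSpace ℝ (Fin (n + 1))), Av⟫
          = ⟪(a : EuclideanSpace ℝ (Fin (n + 1))), (a : EuclideanSpace ℝ (Fin (n + 1)))⟫ := by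
        rw [← inner_add_right]
      have haz : ⟪(a : EuclideanSpace ℝ (Fin (n + 1))), (a : EuclideanSpace ℝ (Fin (n + 1)))⟫
          = 0 := by
        rw [expand, e1, e2, e3] at key
        linarith [e4]
      have ha0 : (a : EuclideanSpace ℝ (Fin (n + 1))) = 0 := inner_self_eq_zero.mp haz
      have hy' : y = -Av := by
        have h0 : y + Av = 0 := e5 ▸ ha0
        exact eq_neg_of_add_eq_zero_left h0
      rw [hezy, hy']
      show -Av + z = z - Av
      abel
    · rintro ⟨v, rfl⟩
      rw [Submodule.mem_orthogonal]
      intro m hm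
      rw [hE] at hm
      obtain ⟨a, rfl⟩ := hm
      have hcoe : ((((H₁.subtypeL + H₃.subtypeL.comp φ) : H₁ →L[ℝ] EuclideanSpace ℝ (Fin (n + 1))) :
          H₁ →ₗ[ℝ] EuclideanSpace ℝ (Fin (n + 1))) a : EuclideanSpace ℝ (Fin (n + 1)))
          = (a : EuclideanSpace ℝ (Fin (n + 1))) + (φ a : EuclideanSpace ℝ (Fin (n + 1))) := rfl
      rw [hcoe, inner_add_left, inner_sub_right, inner_sub_right]
      have e1 : ⟪(a : EuclideanSpace ℝ (Fin (n + 1))), (v : EuclideanSpace ℝ (Fin (n + 1)))⟫ = 0 :=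
        horth _ a.2 _ v.2
      have e2 : ⟪(φ a : EuclideanSpace ℝ (Fin (n + 1))),
          ((ContinuousLinearMap.adjoint φ) v : EuclideanSpace ℝ (Fin (n + 1)))⟫ = 0 := by
        rw [real_inner_comm]
        exact horth _ ((ContinuousLinearMap.adjoint φ) v).2 _ (φ a).2
      rw [e1, e2, hadj a v]
      ring
  refine ⟨part1, ?_⟩
  intro hφ p u x w hp hu hx hw ⟨e, he, hwe⟩
  have hmem : e ∈ (Eᗮ : Set (EuclideanSpace ℝ (Fin (n + 1)))) := he
  rw [part1] at hmem
  obtain ⟨v, rfl⟩ := hmem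
  set Av : EuclideanSpace ℝ (Fin (n + 1)) :=
    ((ContinuousLinearMap.adjoint φ) v : EuclideanSpace ℝ (Fin (n + 1))) with hAv
  have hsplit : (x - Av) = w - p - u - (v : EuclideanSpace ℝ (Fin (n + 1))) := by
    rw [hwe]; abel
  have hmem1 : x - Av ∈ H₁ := H₁.sub_mem hx ((ContinuousLinearMap.adjoint φ) v).2
  have hmem3 : x - Av ∈ H₃ := by
    rw [hsplit]
    exact H₃.sub_mem (H₃.sub_mem (H₃.sub_mem hw hp) hu) v.2
  have hxAv : x = Av := by
    have h0 : x - Av = 0 := inner_self_eq_zero.mp (horth _ hmem1 _ hmem3)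
    exact sub_eq_zero.mp h0
  have hwp : w - p = u + (v : EuclideanSpace ℝ (Fin (n + 1))) := by
    rw [hwe, hxAv]; abel
  have hφpos : 0 < ‖φ‖ := by
    have hne : ‖φ‖ ≠ 0 := fun h => hφ ((ContinuousLinearMap.opNorm_zero_iff φ).mp h)
    exact lt_of_le_of_ne (norm_nonneg φ) (Ne.symm hne)
  have hnx : ‖x‖ ≤ ‖φ‖ * ‖(v : EuclideanSpace ℝ (Fin (n + 1)))‖ := by
    have h1 : ‖x‖ = ‖(ContinuousLinearMap.adjoint φ) v‖ := by rw [hxAv]; rfl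
    have h2 : ‖(ContinuousLinearMap.adjoint φ) v‖ ≤ ‖ContinuousLinearMap.adjoint φ‖ * ‖v‖ :=
      (ContinuousLinearMap.adjoint φ).le_opNorm v
    have h3 : ‖ContinuousLinearMap.adjoint φ‖ = ‖φ‖ :=
      LinearIsometryEquiv.norm_map ContinuousLinearMap.adjoint φ
    have h4 : ‖v‖ = ‖(v : EuclideanSpace ℝ (Fin (n + 1)))‖ := rfl
    rw [h1]; rw [h3, h4] at h2; exact h2
  have hv : ‖x‖ / ‖φ‖ ≤ ‖(v : EuclideanSpace ℝ (Fin (n + 1)))‖ :=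
    (div_le_iff₀ hφpos).mpr (by linarith)
  have htri : ‖(v : EuclideanSpace ℝ (Fin (n + 1)))‖
      ≤ ‖u + (v : EuclideanSpace ℝ (Fin (n + 1)))‖ + ‖u‖ := by
    have h := norm_add_le (u + (v : EuclideanSpace ℝ (Fin (n + 1)))) (-u)
    simpa using h
  rw [hwp]
  linarith
end
end
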